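/- Let (H,μ) be a unital locally standard measure algebra and let e ∈ H be a nonzero element. Then st(H_e) = μ(e)·st(H). In particular, if (Stₙ, μₙ) is a standard measure algebra and 0 ≠ e ∈ Stₙ, then the measure algebra (Stₙ)_e is isomorphic to the standard measure algebra St_{μₙ(e)·n}. -/

import Mathlib

open scoped BigOperators

noncomputable section

/-! ### Steinitz numbers -/

/-- A Steinitz number: a formal product `∏ p ^ r_p` over all primes, with exponents
`r_p ∈ ℕ ∪ {∞}`, encoded as the function sending each prime to its exponent. -/
def SteinitzNumber : Type := Nat.Primes → ℕ∞

namespace SteinitzNumber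

instance : One SteinitzNumber := ⟨fun _ => 0⟩

instance : Mul SteinitzNumber := ⟨fun s t p => s p + t p⟩

/-- The Steinitz number associated with a positive integer `n`. -/
def ofNat (n : ℕ) : SteinitzNumber := fun p => (n.factorization p : ℕ∞)

/-- `b ∈ Ω(s)`: the positive integer `b` divides the Steinitz number `s`. -/
def NatDvd (b : ℕ) (s : SteinitzNumber) : Prop :=
  0 < b ∧ ∀ p : Nat.Primes, (b.factorization p : ℕ∞) ≤ s p

/-- The quotient `s / b` of a Steinitz number by a positive integer dividing it. -/
def divNat (s : SteinitzNumber) (b : ℕ) : SteinitzNumber :=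
  fun p => s p - (b.factorization p : ℕ∞)

/-- An infinite Steinitz number is one which is not a positive integer. -/
def Infinite (s : SteinitzNumber) : Prop := ∀ n : ℕ, s ≠ ofNat n

/-- Steinitz numbers `s` and `t` are rationally connected: `t = (a/b)·s` for positive
integers `a, b` (expressed by cross multiplication). -/
def RationallyConnected (s t : SteinitzNumber) : Prop :=
  ∃ a b : ℕ, 0 < a ∧ 0 < b ∧ ofNat b * t = ofNat a * s

/-- `s₁` finitely divides `s₂`: `s₁ = s₂ / b` for some `b ∈ Ω(s₂)`. -/
def FinDvd (s₁ s₂ : SteinitzNumber) : Prop :=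
  ∃ b : ℕ, NatDvd b s₂ ∧ ofNat b * s₁ = s₂

/-- `s₁ ≤ s₂` iff `s₁ = (a/b)·s₂` with `b ∈ Ω(s₂)` and `1 ≤ a ≤ b`. -/
def Le (s₁ s₂ : SteinitzNumber) : Prop :=
  ∃ a b : ℕ, 0 < a ∧ a ≤ b ∧ NatDvd b s₂ ∧ ofNat b * s₁ = ofNat a * s₂

/-- A saturated set of Steinitz numbers. -/
def Saturated (S : Set SteinitzNumber) : Prop :=
  (∀ s₁ ∈ S, ∀ s₂ ∈ S, RationallyConnected s₁ s₂) ∧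
  (∀ s₂ ∈ S, ∀ s₁, FinDvd s₁ s₂ → s₁ ∈ S) ∧
  (∀ s ∈ S, ∀ n : ℕ, ofNat n * s ∈ S → ∀ k : ℕ, 1 ≤ k → k ≤ n → ofNat k * s ∈ S)

/-- `S(∞, s) = { (a/b)·s : a ∈ ℕ, b ∈ Ω(s) }`. -/
def SInf (s : SteinitzNumber) : Set SteinitzNumber :=
  {t | ∃ a b : ℕ, 0 < a ∧ NatDvd b s ∧ ofNat b * t = ofNat a * s}

/-- `S(r, s) = { (a/b)·s : a, b ∈ ℕ, b ∈ Ω(s), a ≤ r·b }`. -/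
def SBdd (r : ℝ) (s : SteinitzNumber) : Set SteinitzNumber :=
  {t | ∃ a b : ℕ, 0 < a ∧ NatDvd b s ∧ (a : ℝ) ≤ r * b ∧ ofNat b * t = ofNat a * s}

/-- `S⁺(r, s) = { (a/b)·s : a, b ∈ ℕ, b ∈ Ω(s), a < r·b }`. -/
def SBddPlus (r : ℝ) (s : SteinitzNumber) : Set SteinitzNumber :=
  {t | ∃ a b : ℕ, 0 < a ∧ NatDvd b s ∧ (a : ℝ) < r * b ∧ ofNat b * t = ofNat a * s}

end SteinitzNumber

/-! ### Measure algebras -/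

/-- A measure algebra: a Boolean algebra (an associative, commutative algebra over `𝔽₂`
in which every element is idempotent) equipped with a measure `μ` which is positive on
nonzero elements and additive on orthogonal pairs. -/
structure MeasureAlgebra : Type 1 where
  carrier : Type
  [ring : NonUnitalCommRing carrier]
  idem : ∀ x : carrier, x * x = x
  mu : carrier → ℝ
  mu_nonneg : ∀ a, 0 ≤ mu a
  mu_eq_zero_iff : ∀ a, mu a = 0 ↔ a = 0
  mu_add : ∀ a b : carrier, a * b = 0 → mu (a + b) = mu a + mu b

attribute [instance] MeasureAlgebra.ring

namespace MeasureAlgebra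

/-- Isomorphism of measure algebras: a Boolean algebra isomorphism preserving the measures. -/
def Isomorphic (H₁ H₂ : MeasureAlgebra) : Prop :=
  ∃ φ : H₁.carrier ≃+* H₂.carrier, ∀ a, H₂.mu (φ a) = H₁.mu a

/-- Scalar equivalence of measure algebras: a Boolean algebra isomorphism multiplying
the measure by a positive constant `α`. -/
def ScalarEquivalent (H₁ H₂ : MeasureAlgebra) : Prop :=
  ∃ α : ℝ, 0 < α ∧ ∃ φ : H₁.carrier ≃+* H₂.carrier, ∀ a, H₂.mu (φ a) = α * H₁.mu a

/-- The measure subalgebra of a measure algebra supported on a subring, with the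
restricted measure. -/
def restrict (H : MeasureAlgebra) (S : NonUnitalSubring H.carrier) : MeasureAlgebra where
  carrier := S
  idem := fun x => Subtype.ext (H.idem x.1)
  mu := fun x => H.mu x.1
  mu_nonneg := fun a => H.mu_nonneg a.1
  mu_eq_zero_iff := fun a => by
    rw [H.mu_eq_zero_iff a.1]
    exact ⟨fun h => Subtype.ext h, fun h => congrArg Subtype.val h⟩
  mu_add := fun a b hab => H.mu_add a.1 b.1 (congrArg Subtype.val hab)

/-- The standard measure algebra `Stₙ = 𝔽₂ⁿ` with `μ(x₁, …, xₙ) = (x₁ + ⋯ + xₙ)/n`. -/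
def St (n : ℕ) : MeasureAlgebra where
  carrier := Fin n → ZMod 2
  idem := fun x => funext fun i => by
    have h : ∀ a : ZMod 2, a * a = a := by decide
    exact h (x i)
  mu := fun x => (∑ i, ((x i).val : ℝ)) / n
  mu_nonneg := fun a => by positivity
  mu_eq_zero_iff := fun a => by
    constructor
    · intro h
      rcases Nat.eq_zero_or_pos n with hn | hn
      · subst hn; exact funext fun i => i.elim0
      · have hne : ((n : ℝ)) ≠ 0 := by positivity
        have h2 : (∑ i, ((a i).val : ℝ)) = 0 := by
          rcases div_eq_zero_iff.mp h with h' | h'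
          · exact h'
          · exact absurd h' hne
        have h3 := (Finset.sum_eq_zero_iff_of_nonneg
          (fun i _ => by positivity : ∀ i ∈ Finset.univ, (0:ℝ) ≤ ((a i).val : ℝ))).mp h2
        funext i
        have h4 : ((a i).val : ℝ) = 0 := h3 i (Finset.mem_univ i)
        have h5 : (a i).val = 0 := by exact_mod_cast h4
        exact (ZMod.val_eq_zero _).mp h5
    · intro h; subst h; simp
  mu_add := fun a b hab => by
    have key : ∀ u v : ZMod 2, u * v = 0 → (u + v).val = u.val + v.val := by decide
    have h : ∀ i, (((a + b) i).val : ℝ) = ((a i).val : ℝ) + ((b i).val : ℝ) := by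
      intro i
      have h0 : a i * b i = 0 := congrFun hab i
      have h1 := key (a i) (b i) h0
      show (((a i + b i)).val : ℝ) = _
      rw [h1]
      push_cast
      ring
    show (∑ i, (((a + b) i).val : ℝ)) / n
        = (∑ i, ((a i).val : ℝ)) / n + (∑ i, ((b i).val : ℝ)) / n
    rw [← add_div, ← Finset.sum_add_distrib]
    congr 1
    exact Finset.sum_congr rfl fun i _ => h i

/-- A measure algebra is unital if it has an identity element of measure `1`. -/
def Unital (H : MeasureAlgebra) : Prop :=
  ∃ e : H.carrier, (∀ x, e * x = x) ∧ H.mu e = 1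

/-- A measure algebra is locally standard if every finite subset is contained in a
measure subalgebra scalar equivalent to a standard one. -/
def LocallyStandard (H : MeasureAlgebra) : Prop :=
  ∀ t : Finset H.carrier, ∃ (S : NonUnitalSubring H.carrier) (n : ℕ), 0 < n ∧
    (↑t : Set H.carrier) ⊆ S ∧ (H.restrict S).ScalarEquivalent (St n)

/-- For an (idempotent) element `h`, the subring `hH = {x | h·x = x}`. -/
def cornerSubring (H : MeasureAlgebra) (h : H.carrier) : NonUnitalSubring H.carrier where
  carrier := {x | h * x = x}
  zero_mem' := mul_zero h
  add_mem' := by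
    intro a b ha hb
    simp only [Set.mem_setOf_eq] at *
    rw [mul_add, ha, hb]
  neg_mem' := by
    intro a ha
    simp only [Set.mem_setOf_eq] at *
    rw [mul_neg, ha]
  mul_mem' := by
    intro a b ha hb
    simp only [Set.mem_setOf_eq] at *
    rw [← mul_assoc, ha]

/-- The unital measure algebra `H_h = (hH, μ(·)/μ(h))`. -/
def corner (H : MeasureAlgebra) (h : H.carrier) : MeasureAlgebra where
  carrier := H.cornerSubring h
  idem := fun x => Subtype.ext (H.idem x.1)
  mu := fun x => H.mu x.1 / H.mu h
  mu_nonneg := fun a => div_nonneg (H.mu_nonneg a.1) (H.mu_nonneg h)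
  mu_eq_zero_iff := fun a => by
    constructor
    · intro ha
      rcases div_eq_zero_iff.mp ha with h' | h'
      · exact Subtype.ext ((H.mu_eq_zero_iff a.1).mp h')
      · have hh : h = 0 := (H.mu_eq_zero_iff h).mp h'
        have h2 : h * (a : H.carrier) = a := a.2
        apply Subtype.ext
        show (a : H.carrier) = 0
        generalize hx : (a : H.carrier) = x at h2 ⊢
        rw [← h2, hh, zero_mul]
    · intro h'
      subst h'
      have h0 : H.mu ((0 : H.cornerSubring h) : H.carrier) = 0 :=
        (H.mu_eq_zero_iff _).mpr rfl
      show H.mu ((0 : H.cornerSubring h) : H.carrier) / H.mu h = 0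
      rw [h0, zero_div]
  mu_add := fun a b hab => by
    have : H.mu ((a : H.carrier) + b) = H.mu a + H.mu b :=
      H.mu_add a.1 b.1 (congrArg Subtype.val hab)
    show H.mu ((a + b : H.cornerSubring h) : H.carrier) / H.mu h = _
    rw [show ((a + b : H.cornerSubring h) : H.carrier) = (a : H.carrier) + b from rfl,
      this, add_div]

/-- `D(H)`: the set of `n` such that `H` has a subalgebra containing the identity of `H`
and isomorphic to the standard measure algebra `Stₙ`. -/
def D (H : MeasureAlgebra) : Set ℕ :=
  {n | ∃ S : NonUnitalSubring H.carrier,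
    (∃ e ∈ S, ∀ x : H.carrier, e * x = x) ∧ (H.restrict S).Isomorphic (St n)}

/-- The Steinitz number `st(H)` of a (unital locally standard) measure algebra:
the least common multiple of `D(H)`. -/
def st (H : MeasureAlgebra) : SteinitzNumber :=
  fun p => ⨆ n ∈ H.D, (n.factorization p : ℕ∞)

/-- The spectrum of a measure algebra: the set of Steinitz numbers `st(H_h)` for `h ≠ 0`. -/
def Spec (H : MeasureAlgebra) : Set SteinitzNumber :=
  {s | ∃ h : H.carrier, h ≠ 0 ∧ (H.corner h).st = s}

end MeasureAlgebra

lemma zmod2_ne_zero : ∀ u : ZMod 2, u ≠ 0 → u = 1 := by decide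

namespace MeasureAlgebra

/-- The set of coordinates where `x` is `1`. -/
def supp {n : ℕ} (x : Fin n → ZMod 2) : Finset (Fin n) :=
  Finset.univ.filter (fun i => x i ≠ 0)

lemma val_sum_eq_card {n : ℕ} (x : Fin n → ZMod 2) :
    (∑ i, ((x i).val : ℝ)) = (supp x).card := by
  classical
  have h1 : ∀ i, ((x i).val : ℝ) = if x i ≠ 0 then (1:ℝ) else 0 := by
    intro i
    by_cases h : x i = 0
    · simp [h]
    · rw [zmod2_ne_zero _ h]; simp [h, ZMod.val_one]
  rw [Finset.sum_congr rfl (fun i _ => h1 i), Finset.sum_boole]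
  rfl

lemma corner_St_iso (n : ℕ) (x : (St n).carrier) (hx : x ≠ 0) (m : ℕ)
    (hm : (m : ℝ) = (St n).mu x * n) : ((St n).corner x).Isomorphic (St m) := by
  have hn : 0 < n := by
    rcases Nat.eq_zero_or_pos n with h | h
    · exfalso; subst h; exact hx (funext fun i => i.elim0)
    · exact h
  -- measure of x is positive
  have hmux : 0 < (St n).mu x :=
    lt_of_le_of_ne ((St n).mu_nonneg x)
      (Ne.symm (fun h => hx (((St n).mu_eq_zero_iff x).mp h)))
  have hm0 : 0 < m := by
    have : (0:ℝ) < (m:ℝ) := by rw [hm]; positivity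
    exact_mod_cast this
  -- card of supp is m
  have hcard : (supp x).card = m := by
    have h1 : ((supp x).card : ℝ) = (m : ℝ) := by
      rw [← val_sum_eq_card (n := n) x]
      rw [hm]
      show (∑ i, ((x i).val : ℝ)) = (∑ i, ((x i).val : ℝ)) / n * n
      field_simp
    exact_mod_cast h1
  let ι : (supp x : Finset (Fin n)) ≃ Fin m := Finset.equivFinOfCardEq hcard
  -- membership characterization
  have hmem : ∀ y : (St n).carrier, (x * y = y) ↔ ∀ i, i ∉ supp x → y i = 0 := by
    intro y
    constructor
    · intro h i hi
      have hxi : x i = 0 := by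
        by_contra h'
        exact hi (by simp [supp, h'])
      have := congrFun h i
      show y i = 0
      rw [← this]
      show x i * y i = 0
      rw [hxi, zero_mul]
    · intro h
      funext i
      by_cases hi : i ∈ supp x
      · have hxi : x i ≠ 0 := by simpa [supp] using hi
        show x i * y i = y i
        rw [zmod2_ne_zero _ hxi, one_mul]
      · show x i * y i = y i
        rw [h i hi, mul_zero]
  classical
  refine ⟨{
    toFun := fun y => fun j => y.1 (ι.symm j : Fin n)
    invFun := fun z => ⟨fun i => if h : i ∈ supp x then z (ι ⟨i, h⟩) else 0, ?_⟩
    left_inv := ?_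
    right_inv := ?_
    map_mul' := ?_
    map_add' := ?_ }, ?_⟩
  · refine (hmem _).mpr fun i hi => ?_
    simp [hi]
  · rintro ⟨y, hy⟩
    apply Subtype.ext
    funext i
    by_cases hi : i ∈ supp x
    · simp only [hi, dif_pos]
      congr 1
      have : ι.symm (ι ⟨i, hi⟩) = ⟨i, hi⟩ := ι.symm_apply_apply _
      rw [this]
    · simp only [hi, dif_neg, not_false_iff]
      exact ((hmem y).mp hy i hi).symm
  · intro z
    funext j
    have hji : (ι.symm j : Fin n) ∈ supp x := (ι.symm j).2
    simp only [hji, dif_pos]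
    congr 1
    have : (⟨(ι.symm j : Fin n), hji⟩ : (supp x : Finset (Fin n))) = ι.symm j := rfl
    rw [this, ι.apply_symm_apply]
  · intro y y'; rfl
  · intro y y'; rfl
  · intro a
    show (∑ j, ((a.1 (ι.symm j : Fin n)).val : ℝ)) / m
        = (∑ i, ((a.1 i).val : ℝ)) / n / ((St n).mu x)
    have hsum : (∑ j, ((a.1 (ι.symm j : Fin n)).val : ℝ)) = ∑ i, ((a.1 i).val : ℝ) := by
      set f : Fin n → ℝ := fun i => ((a.1 i).val : ℝ) with hf
      calc (∑ j : Fin m, f (ι.symm j)) = ∑ s : {i // i ∈ supp x}, f s.1 :=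
            Equiv.sum_comp ι.symm (fun s => f s.1)
        _ = ∑ i ∈ supp x, f i := by
            rw [Finset.univ_eq_attach]; exact Finset.sum_attach _ _
        _ = ∑ i, f i := Finset.sum_subset (Finset.subset_univ _) (fun i _ hi => by
            simp only [hf]; rw [(hmem a.1).mp a.2 i hi]; simp)
    rw [hsum]
    have hμ : (St n).mu x = m / n := by
      rw [eq_div_iff (by positivity : (n:ℝ) ≠ 0)]
      exact hm.symm
    rw [hμ]
    field_simp

end MeasureAlgebra

namespace MeasureAlgebra

lemma Isomorphic.trans {H₁ H₂ H₃ : MeasureAlgebra} (h12 : H₁.Isomorphic H₂)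
    (h23 : H₂.Isomorphic H₃) : H₁.Isomorphic H₃ := by
  obtain ⟨φ, hφ⟩ := h12; obtain ⟨ψ, hψ⟩ := h23
  exact ⟨φ.trans ψ, fun a => by rw [RingEquiv.coe_trans, Function.comp_apply, hψ, hφ]⟩

/-- Corners of isomorphic measure algebras at corresponding elements are isomorphic. -/
lemma corner_iso {H₁ H₂ : MeasureAlgebra} (φ : H₁.carrier ≃+* H₂.carrier)
    (hφ : ∀ a, H₂.mu (φ a) = H₁.mu a) (h : H₁.carrier) :
    (H₁.corner h).Isomorphic (H₂.corner (φ h)) := by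
  refine ⟨{
    toFun := fun y => ⟨φ y.1, show φ h * φ y.1 = φ y.1 by rw [← map_mul]; exact congrArg φ y.2⟩
    invFun := fun z => ⟨φ.symm z.1, show h * φ.symm z.1 = φ.symm z.1 by
      have := congrArg φ.symm z.2
      rwa [map_mul, RingEquiv.symm_apply_apply] at this⟩
    left_inv := fun y => Subtype.ext (φ.symm_apply_apply y.1)
    right_inv := fun z => Subtype.ext (φ.apply_symm_apply z.1)
    map_mul' := fun y y' => Subtype.ext (map_mul φ y.1 y'.1)
    map_add' := fun y y' => Subtype.ext (map_add φ y.1 y'.1) }, ?_⟩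
  intro a
  show H₂.mu (φ a.1) / H₂.mu (φ h) = H₁.mu a.1 / H₁.mu h
  rw [hφ, hφ]

/-- The subring of the corner algebra `H_e` induced by a subring `S` of `H`. -/
def cornerRestrict (H : MeasureAlgebra) (S : NonUnitalSubring H.carrier) (e : H.carrier) :
    NonUnitalSubring (H.corner e).carrier where
  carrier := {y | y.1 ∈ S}
  zero_mem' := S.zero_mem
  add_mem' := fun ha hb => S.add_mem ha hb
  neg_mem' := fun ha => S.neg_mem ha
  mul_mem' := fun ha hb => S.mul_mem ha hb

/-- `(H_e)|_{S ∩ eH}` is isomorphic to the corner of `H|_S` at `e`. -/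
lemma restrict_corner_iso (H : MeasureAlgebra) (S : NonUnitalSubring H.carrier)
    (e : H.carrier) (heS : e ∈ S) :
    ((H.corner e).restrict (H.cornerRestrict S e)).Isomorphic
      ((H.restrict S).corner ⟨e, heS⟩) := by
  refine ⟨{
    toFun := fun y => ⟨⟨y.1.1, y.2⟩, Subtype.ext y.1.2⟩
    invFun := fun z => ⟨⟨z.1.1, congrArg Subtype.val z.2⟩, z.1.2⟩
    left_inv := fun y => rfl
    right_inv := fun z => rfl
    map_mul' := fun y y' => rfl
    map_add' := fun y y' => rfl }, fun a => rfl⟩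

end MeasureAlgebra

namespace MeasureAlgebra

/-- Key lemma: if `S ≅ Stₙ` and `e ∈ S` is nonzero with `μ(e)·N = c`, then `c ∈ D(H_e)`. -/
lemma mem_D_corner (H : MeasureAlgebra) (S : NonUnitalSubring H.carrier) (N : ℕ)
    (hiso : (H.restrict S).Isomorphic (St N)) (e : H.carrier) (heS : e ∈ S) (he : e ≠ 0)
    (c : ℕ) (hc : (c : ℝ) = H.mu e * N) : c ∈ (H.corner e).D := by
  obtain ⟨φ, hφ⟩ := hiso
  have he' : (⟨e, heS⟩ : (H.restrict S).carrier) ≠ 0 := fun h => he (congrArg Subtype.val h)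
  have hφe : φ ⟨e, heS⟩ ≠ 0 := fun h => he' (φ.injective (h.trans (map_zero φ).symm))
  have hiso1 : ((H.restrict S).corner ⟨e, heS⟩).Isomorphic ((St N).corner (φ ⟨e, heS⟩)) :=
    corner_iso φ hφ _
  have hiso2 : ((St N).corner (φ ⟨e, heS⟩)).Isomorphic (St c) := by
    apply corner_St_iso N _ hφe c
    rw [hφ ⟨e, heS⟩]
    exact hc
  refine ⟨H.cornerRestrict S e, ⟨⟨e, H.idem e⟩, heS, ?_⟩, ?_⟩
  · intro x
    exact Subtype.ext x.2
  · exact ((H.restrict_corner_iso S e heS).trans hiso1).trans hiso2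

/-- In a subalgebra isomorphic to `St N`, every measure is a multiple of `1/N`. -/
lemma mu_eq_div (H : MeasureAlgebra) (S : NonUnitalSubring H.carrier) (N : ℕ)
    (hiso : (H.restrict S).Isomorphic (St N)) (x : H.carrier) (hx : x ∈ S) :
    ∃ w : ℕ, H.mu x = (w : ℝ) / N ∧ (x ≠ 0 → 0 < w) := by
  obtain ⟨φ, hφ⟩ := hiso
  refine ⟨∑ i, (φ ⟨x, hx⟩ i).val, ?_, ?_⟩
  · have := hφ ⟨x, hx⟩
    rw [show (H.restrict S).mu ⟨x, hx⟩ = H.mu x from rfl] at this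
    rw [← this]
    show (∑ i, ((φ ⟨x, hx⟩ i).val : ℝ)) / N = _
    push_cast
    ring
  · intro hx0
    have hx0' : (⟨x, hx⟩ : (H.restrict S).carrier) ≠ 0 := fun h => hx0 (congrArg Subtype.val h)
    have hφx : φ ⟨x, hx⟩ ≠ 0 := fun h => hx0' (φ.injective (h.trans (map_zero φ).symm))
    obtain ⟨i, hi⟩ : ∃ i, φ ⟨x, hx⟩ i ≠ 0 := by
      by_contra h
      push_neg at h
      exact hφx (funext h)
    have : 0 < (φ ⟨x, hx⟩ i).val := by
      rw [zmod2_ne_zero _ hi]; rw [ZMod.val_one]; norm_num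
    exact Finset.sum_pos' (fun j _ => Nat.zero_le _) ⟨i, Finset.mem_univ i, this⟩

/-- Unital version of local standardness: finite sets lie in unital subalgebras
isomorphic (not just scalar equivalent) to a standard algebra. -/
lemma exists_unital_iso (H : MeasureAlgebra) (one : H.carrier)
    (hone : ∀ x, one * x = x) (hmu1 : H.mu one = 1) (hls : H.LocallyStandard)
    (t : Finset H.carrier) :
    ∃ (S : NonUnitalSubring H.carrier) (N : ℕ), 0 < N ∧ (↑t : Set H.carrier) ⊆ S ∧
      one ∈ S ∧ (H.restrict S).Isomorphic (St N) := by
  classical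
  obtain ⟨S, n, hn, hsub, α, hα, φ, hφ⟩ := hls (insert one t)
  have honeS : one ∈ S := hsub (by simp)
  have htS : (↑t : Set H.carrier) ⊆ S := fun x hx => hsub (by simp [hx])
  have hone' : ∀ z : (St n).carrier, φ ⟨one, honeS⟩ * z = z := by
    intro z
    have : φ ⟨one, honeS⟩ * φ (φ.symm z) = φ (φ.symm z) := by
      rw [← map_mul φ ⟨one, honeS⟩ (φ.symm z)]
      congr 1
      exact Subtype.ext (hone (φ.symm z).1)
    rwa [φ.apply_symm_apply] at this
  have hφone : φ ⟨one, honeS⟩ = fun _ => 1 := by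
    have h1 := hone' (fun _ => 1)
    funext i
    have := congrFun h1 i
    show φ ⟨one, honeS⟩ i = 1
    rw [← this]
    show _ = φ ⟨one, honeS⟩ i * 1
    rw [mul_one]
  have hmuone : (St n).mu (φ ⟨one, honeS⟩) = 1 := by
    rw [hφone]
    show (∑ _i : Fin n, ((1 : ZMod 2).val : ℝ)) / n = 1
    rw [ZMod.val_one]
    simp only [Nat.cast_one, Finset.sum_const, Finset.card_univ, Fintype.card_fin, smul_eq_mul, nsmul_eq_mul,
      mul_one]
    field_simp
  have hα1 : α = 1 := by
    have := hφ ⟨one, honeS⟩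
    rw [hmuone, show (H.restrict S).mu ⟨one, honeS⟩ = H.mu one from rfl, hmu1, mul_one] at this
    exact this.symm
  exact ⟨S, n, hn, htS, honeS, φ, fun a => by rw [hφ, hα1, one_mul]⟩

/-- From `k ∈ D(H')` extract a nonzero element of measure `1/k`. -/
lemma D_elt (H' : MeasureAlgebra) (one : H'.carrier) (hone : ∀ x, one * x = x)
    (hone0 : one ≠ 0) (k : ℕ) (hk : k ∈ H'.D) :
    0 < k ∧ ∃ u : H'.carrier, u ≠ 0 ∧ H'.mu u = 1 / k := by
  classical
  obtain ⟨S, ⟨e', he'S, he'⟩, φ, hφ⟩ := hk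
  have he'one : e' = one := by
    have h1 : e' * one = one := he' one
    have h2 : one * e' = e' := hone e'
    rw [mul_comm] at h2
    rw [← h1, h2]
  subst he'one
  have hone' : (⟨e', he'S⟩ : (H'.restrict S).carrier) ≠ 0 :=
    fun h => hone0 (congrArg Subtype.val h)
  have hφ1 : φ ⟨e', he'S⟩ ≠ 0 := fun h => hone' (φ.injective (h.trans (map_zero φ).symm))
  obtain ⟨i, hi⟩ : ∃ i, φ ⟨e', he'S⟩ i ≠ 0 := by
    by_contra h
    push_neg at h
    exact hφ1 (funext h)
  have hk0 : 0 < k := i.pos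
  have hz : ∃ z : (St k).carrier, ∀ j : Fin k, z j = if j = i then 1 else 0 := by
    refine ⟨(fun j => if j = i then 1 else 0 : Fin k → ZMod 2), fun j => rfl⟩
  obtain ⟨z, hzj⟩ := hz
  have hzi : z i = 1 := by rw [hzj]; simp
  refine ⟨hk0, (φ.symm z).1, ?_, ?_⟩
  · intro h
    have h0 : φ.symm z = 0 := Subtype.ext h
    have h1 : z = 0 := by
      have := congrArg φ h0
      rwa [φ.apply_symm_apply, map_zero] at this
    have h2 := congrFun h1 i
    rw [hzi] at h2
    exact one_ne_zero h2
  · have h4 := hφ (φ.symm z)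
    rw [φ.apply_symm_apply] at h4
    have h3 : H'.mu (φ.symm z).1 = (St k).mu z := h4.symm
    rw [h3]
    show (∑ j, ((z j).val : ℝ)) / k = 1 / k
    congr 1
    rw [Finset.sum_eq_single_of_mem i (Finset.mem_univ i)]
    · rw [hzi, ZMod.val_one]; norm_num
    · intro j _ hj
      rw [hzj j, if_neg hj]
      simp

end MeasureAlgebra

lemma SteinitzNumber.ext' {f g : SteinitzNumber} (h : ∀ p, f p = g p) : f = g := funext h

lemma SteinitzNumber.mul_apply (s t : SteinitzNumber) (p : Nat.Primes) :
    (s * t) p = s p + t p := rfl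

lemma fact_le_of_dvd {d n : ℕ} (hd : d ≠ 0) (hn : n ≠ 0) (hdvd : d ∣ n) (p : Nat.Primes) :
    d.factorization p ≤ n.factorization p :=
  (Nat.factorization_le_iff_dvd hd hn).mpr hdvd p

lemma fact_mul_eq {a b c d : ℕ} (ha : a ≠ 0) (hb : b ≠ 0) (hc : c ≠ 0) (hd : d ≠ 0)
    (h : a * b = c * d) (p : Nat.Primes) :
    a.factorization p + b.factorization p = c.factorization p + d.factorization p := by
  have h1 : (a * b).factorization = a.factorization + b.factorization :=
    Nat.factorization_mul ha hb
  have h2 : (c * d).factorization = c.factorization + d.factorization :=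
    Nat.factorization_mul hc hd
  have := congrArg (fun f : ℕ →₀ ℕ => f p) (h1.symm.trans (h ▸ h2))
  simpa using this


/-- Let `(H, μ)` be a unital locally standard measure algebra and `e ≠ 0`. Then
`st(H_e) = μ(e) · st(H)` (where `μ(e)` is a rational number `a/b` with `b ∈ Ω(st H)`).
In particular, for a standard measure algebra `Stₙ` and `0 ≠ e ∈ Stₙ`, the measure
algebra `(Stₙ)_e` is isomorphic to the standard measure algebra `St_{μₙ(e)·n}`. -/
theorem st_corner_eq_mu_mul_st
    (H : MeasureAlgebra) (hu : H.Unital) (hls : H.LocallyStandard)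
    (e : H.carrier) (he : e ≠ 0) :
    (∃ a b : ℕ, 0 < a ∧ 0 < b ∧ H.mu e = (a : ℝ) / b ∧
        SteinitzNumber.NatDvd b H.st ∧
        SteinitzNumber.ofNat b * (H.corner e).st = SteinitzNumber.ofNat a * H.st) ∧
    (∀ (n : ℕ) (x : (MeasureAlgebra.St n).carrier), x ≠ 0 →
      ∀ m : ℕ, (m : ℝ) = (MeasureAlgebra.St n).mu x * n →
        ((MeasureAlgebra.St n).corner x).Isomorphic (MeasureAlgebra.St m)) := by
  classical
  open MeasureAlgebra SteinitzNumber in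
  refine ⟨?_, fun n x hx m hm => corner_St_iso n x hx m hm⟩
  obtain ⟨one, hone, hmu1⟩ := hu
  have hone0 : one ≠ 0 := by
    intro h
    rw [h, (H.mu_eq_zero_iff 0).mpr rfl] at hmu1
    norm_num at hmu1
  -- Step 1: embed {e} into a standard subalgebra
  obtain ⟨S₀, n₀, hn₀, hsub₀, honeS₀, hiso₀⟩ :=
    MeasureAlgebra.exists_unital_iso H one hone hmu1 hls {e}
  have heS₀ : e ∈ S₀ := hsub₀ (by simp)
  obtain ⟨a, hmue, ha⟩ := MeasureAlgebra.mu_eq_div H S₀ n₀ hiso₀ e heS₀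
  have ha0 : 0 < a := ha he
  have hn₀D : n₀ ∈ H.D := ⟨S₀, ⟨one, honeS₀, hone⟩, hiso₀⟩
  have hmue' : (a : ℝ) = H.mu e * n₀ := by
    rw [hmue]; field_simp
  have haDc : a ∈ (H.corner e).D :=
    MeasureAlgebra.mem_D_corner H S₀ n₀ hiso₀ e heS₀ he a hmue'
  have hμe : 0 < H.mu e := lt_of_le_of_ne (H.mu_nonneg e)
    (Ne.symm (fun h => he ((H.mu_eq_zero_iff e).mp h)))
  -- identity of corner e
  obtain ⟨o, ho1, hoid⟩ : ∃ o : (H.corner e).carrier, o.1 = e ∧ ∀ y, o * y = y :=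
    ⟨⟨e, H.idem e⟩, rfl, fun y => Subtype.ext y.2⟩
  have ho0 : o ≠ 0 := fun h => he (by rw [← ho1, h]; rfl)
  refine ⟨a, n₀, ha0, hn₀, hmue, ⟨hn₀, fun p => ?_⟩, ?_⟩
  · exact le_iSup₂ (f := fun n (_ : n ∈ H.D) => (n.factorization p : ℕ∞)) n₀ hn₀D
  · refine SteinitzNumber.ext' fun p => ?_
    rw [SteinitzNumber.mul_apply, SteinitzNumber.mul_apply]
    show (n₀.factorization p : ℕ∞) + ⨆ m ∈ (H.corner e).D, (m.factorization p : ℕ∞)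
        = (a.factorization p : ℕ∞) + ⨆ k ∈ H.D, (k.factorization p : ℕ∞)
    haveI h₁ : Nonempty {m // m ∈ (H.corner e).D} := ⟨⟨a, haDc⟩⟩
    haveI h₂ : Nonempty {k // k ∈ H.D} := ⟨⟨n₀, hn₀D⟩⟩
    rw [iSup_subtype', iSup_subtype', ENat.add_iSup, ENat.add_iSup]
    apply le_antisymm
    · refine iSup_le ?_
      rintro ⟨m, hm⟩
      -- extract u with corner-measure 1/m
      obtain ⟨hm0, u, hu0, hmuu⟩ :=
        MeasureAlgebra.D_elt (H.corner e) o hoid ho0 m hm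
      have hu10 : u.1 ≠ 0 := fun h => hu0 (Subtype.ext h)
      obtain ⟨S, N, hN, hsub, honeS, hiso⟩ :=
        MeasureAlgebra.exists_unital_iso H one hone hmu1 hls {e, u.1}
      have heS : e ∈ S := hsub (by simp)
      have huS : u.1 ∈ S := hsub (by simp)
      have hND : N ∈ H.D := ⟨S, ⟨one, honeS, hone⟩, hiso⟩
      obtain ⟨c, hc, hc'⟩ := MeasureAlgebra.mu_eq_div H S N hiso e heS
      have hc0 : 0 < c := hc' he
      obtain ⟨w, hw, hw'⟩ := MeasureAlgebra.mu_eq_div H S N hiso u.1 huS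
      have hw0 : 0 < w := hw' hu10
      -- c = m * w
      have hmuu' : H.mu u.1 / H.mu e = 1 / m := hmuu
      have hceq : c = m * w := by
        have h1 : (w : ℝ) / N / ((c:ℝ)/N) = 1 / m := by
          rw [← hw, ← hc]; exact hmuu'
        have h2 : (w : ℝ) * m = c := by
          have hN' : (N:ℝ) ≠ 0 := by positivity
          have hc'' : (c:ℝ) ≠ 0 := by positivity
          have hm' : (m:ℝ) ≠ 0 := by positivity
          field_simp at h1
          linarith [h1]
        exact_mod_cast (by rw [← h2]; ring : (c:ℝ) = (m:ℝ) * w)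
      -- a * N = c * n₀
      have hanc : a * N = c * n₀ := by
        have : (a : ℝ) / n₀ = (c : ℝ) / N := by rw [← hmue, ← hc]
        have hN' : (N:ℝ) ≠ 0 := by positivity
        have hn' : (n₀:ℝ) ≠ 0 := by positivity
        field_simp at this
        rw [mul_comm c n₀]
        exact_mod_cast this
      refine le_iSup_of_le ⟨N, hND⟩ ?_
      have hb1 : m.factorization p ≤ c.factorization p :=
        fact_le_of_dvd hm0.ne' hc0.ne' ⟨w, hceq⟩ p
      have hb2 : c.factorization p + n₀.factorization p
          = a.factorization p + N.factorization p :=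
        fact_mul_eq hc0.ne' hn₀.ne' ha0.ne' hN.ne' (hanc.symm) p
      have : n₀.factorization p + m.factorization p
          ≤ a.factorization p + N.factorization p := by omega
      exact_mod_cast this
    · refine iSup_le ?_
      rintro ⟨k, hk⟩
      obtain ⟨hk0, u, hu0, hmuu⟩ := MeasureAlgebra.D_elt H one hone hone0 k hk
      obtain ⟨S, N, hN, hsub, honeS, hiso⟩ :=
        MeasureAlgebra.exists_unital_iso H one hone hmu1 hls {e, u}
      have heS : e ∈ S := hsub (by simp)
      have huS : u ∈ S := hsub (by simp)
      obtain ⟨c, hc, hc'⟩ := MeasureAlgebra.mu_eq_div H S N hiso e heS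
      have hc0 : 0 < c := hc' he
      obtain ⟨w, hw, hw'⟩ := MeasureAlgebra.mu_eq_div H S N hiso u huS
      have hw0 : 0 < w := hw' hu0
      have hcDc : c ∈ (H.corner e).D := by
        refine MeasureAlgebra.mem_D_corner H S N hiso e heS he c ?_
        rw [hc]; field_simp
      -- N = k * w
      have hNkw : N = k * w := by
        have h1 : (w:ℝ)/N = 1/k := by rw [← hw]; exact hmuu
        have hN' : (N:ℝ) ≠ 0 := by positivity
        have hk' : (k:ℝ) ≠ 0 := by positivity
        field_simp at h1
        exact_mod_cast (by linarith [h1] : (N:ℝ) = (k:ℝ) * w)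
      have hanc : a * N = c * n₀ := by
        have : (a : ℝ) / n₀ = (c : ℝ) / N := by rw [← hmue, ← hc]
        have hN' : (N:ℝ) ≠ 0 := by positivity
        have hn' : (n₀:ℝ) ≠ 0 := by positivity
        field_simp at this
        rw [mul_comm c n₀]
        exact_mod_cast this
      refine le_iSup_of_le ⟨c, hcDc⟩ ?_
      have hb1 : k.factorization p ≤ N.factorization p :=
        fact_le_of_dvd hk0.ne' hN.ne' ⟨w, hNkw⟩ p
      have hb2 : c.factorization p + n₀.factorization p
          = a.factorization p + N.factorization p :=
        fact_mul_eq hc0.ne' hn₀.ne' ha0.ne' hN.ne' (hanc.symm) p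
      have : a.factorization p + k.factorization p
          ≤ n₀.factorization p + c.factorization p := by omega
      exact_mod_cast this
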